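/- Let X be a metric space, n ≥ 1 an integer, and μ the n-dimensional Hausdorff measure on X. Let V ⊆ X be a subset with dist(x, y) ≤ π for all x, y ∈ V, let c ∈ (0, 1], and let φ : V → X be an injective map such that for all x, y ∈ V, dist(φ(x), φ(y)) ≤ π and sin(dist(φ(x), φ(y))/2) ≥ c · sin(dist(x, y)/2). Then μ(φ(V)) ≥ cⁿ · μ(V). -/

import Mathlib

open MeasureTheory Real
open scoped ENNReal

private lemma key_dist {c d d' u : ℝ} (hc0 : 0 < c)
    (hd0 : 0 ≤ d) (hdπ : d ≤ π) (hd'0 : 0 ≤ d')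
    (hsin : c * Real.sin (d / 2) ≤ Real.sin (d' / 2))
    (hu : d' ≤ u) (ha : π * u / (4 * c) ≤ 1) :
    d ≤ (c * (1 - (π * u / (4 * c)) ^ 2 / 4))⁻¹ * d' := by
  have hπ := Real.pi_pos
  have hu0 : 0 ≤ u := hd'0.trans hu
  set a : ℝ := π * u / (4 * c) with ha_def
  have ha0 : 0 ≤ a := by positivity
  have hden : (0:ℝ) < 1 - a ^ 2 / 4 := by nlinarith
  have h1 : Real.sin (d / 2) ≤ d' / (2 * c) := by
    rw [le_div_iff₀ (by positivity)]
    nlinarith [hsin, Real.sin_le (show (0:ℝ) ≤ d' / 2 by linarith)]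
  have h2 : 2 / π * (d / 2) ≤ Real.sin (d / 2) :=
    Real.mul_le_sin (by linarith) (by linarith)
  have h3 : d / 2 ≤ a := by
    rw [ha_def]
    rw [div_le_div_iff₀ two_pos (by positivity)]
    have : d / π ≤ d' / (2 * c) := by
      calc d / π = 2 / π * (d / 2) := by ring
        _ ≤ Real.sin (d / 2) := h2
        _ ≤ d' / (2 * c) := h1
    rw [div_le_div_iff₀ hπ (by positivity)] at this
    nlinarith
  have h4 : d / 2 * (1 - a ^ 2 / 4) ≤ Real.sin (d / 2) := by
    rcases eq_or_lt_of_le hd0 with h | h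
    · simp [← h]
    · have ht : 0 < d / 2 := by linarith
      have hcube := Real.sin_gt_sub_cube ht
      nlinarith [pow_le_pow_left₀ ht.le h3 2]
  rw [inv_mul_eq_div, le_div_iff₀ (by positivity)]
  have h6 : c * Real.sin (d / 2) ≤ d' / 2 :=
    hsin.trans (Real.sin_le (by linarith))
  nlinarith [mul_le_mul_of_nonneg_left h4 hc0.le, h6]

/-- Lemma 4.4, case κ = 1: an injection on a set of diameter at most π that
expands sin of half-distances by a factor c ∈ (0,1] increases n-dimensional
Hausdorff measure by at least cⁿ. -/
theorem hausdorff_measure_image_ge_of_sin_expansion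
    {X : Type*} [MetricSpace X] [MeasurableSpace X] [BorelSpace X]
    (n : ℕ) (hn : 1 ≤ n) (V : Set X)
    (hdiam : ∀ x ∈ V, ∀ y ∈ V, dist x y ≤ π)
    (c : ℝ) (hc0 : 0 < c) (hc1 : c ≤ 1)
    (φ : X → X) (hinj : Set.InjOn φ V)
    (hdiam' : ∀ x ∈ V, ∀ y ∈ V, dist (φ x) (φ y) ≤ π)
    (hexp : ∀ x ∈ V, ∀ y ∈ V,
      Real.sin (dist (φ x) (φ y) / 2) ≥ c * Real.sin (dist x y / 2)) :
    μH[(n : ℝ)] (φ '' V) ≥ ENNReal.ofReal (c ^ n) * μH[(n : ℝ)] V := by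
  have hπ := Real.pi_pos
  have hd0 : (0:ℝ) ≤ (n : ℝ) := Nat.cast_nonneg n
  -- Main estimate at scale `u`.
  have main : ∀ u : ℝ, 0 < u → π * u / (4 * c) ≤ 1 →
      μH[(n : ℝ)] V ≤
        ENNReal.ofReal ((c * (1 - (π * u / (4 * c)) ^ 2 / 4))⁻¹) ^ (n : ℝ) *
          μH[(n : ℝ)] (φ '' V) := by
    intro u hu0 hu1
    set K : ℝ := (c * (1 - (π * u / (4 * c)) ^ 2 / 4))⁻¹ with hKdef
    have ha0 : 0 ≤ π * u / (4 * c) := by positivity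
    have hden : (0:ℝ) < 1 - (π * u / (4 * c)) ^ 2 / 4 := by nlinarith
    have hK0 : 0 < K := by rw [hKdef]; positivity
    have hCd0 : (ENNReal.ofReal K) ^ (n : ℝ) ≠ 0 := by
      simp [ENNReal.ofReal_pos.2 hK0, ENNReal.rpow_eq_zero_iff, ENNReal.ofReal_ne_top,
        (ENNReal.ofReal_pos.2 hK0).ne']
    have hCd : (ENNReal.ofReal K) ^ (n : ℝ) ≠ ∞ :=
      ENNReal.rpow_ne_top_of_nonneg hd0 ENNReal.ofReal_ne_top
    -- key diameter estimate for pullbacks of small sets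
    have hdi : ∀ s : Set X, EMetric.diam s ≤ ENNReal.ofReal u →
        EMetric.diam (V ∩ φ ⁻¹' s) ≤ ENNReal.ofReal K * EMetric.diam s := by
      intro s hs
      refine EMetric.diam_le fun x hx y hy => ?_
      have h1 : edist (φ x) (φ y) ≤ EMetric.diam s := EMetric.edist_le_diam_of_mem hx.2 hy.2
      have h2 : dist (φ x) (φ y) ≤ u := by
        have := h1.trans hs
        rw [edist_dist] at this
        exact (ENNReal.ofReal_le_ofReal_iff hu0.le).1 this
      have h3 : dist x y ≤ K * dist (φ x) (φ y) :=
        key_dist hc0 dist_nonneg (hdiam x hx.1 y hy.1) dist_nonneg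
          (hexp x hx.1 y hy.1) h2 hu1
      calc edist x y = ENNReal.ofReal (dist x y) := edist_dist x y
        _ ≤ ENNReal.ofReal (K * dist (φ x) (φ y)) := ENNReal.ofReal_le_ofReal h3
        _ = ENNReal.ofReal K * ENNReal.ofReal (dist (φ x) (φ y)) := ENNReal.ofReal_mul hK0.le
        _ = ENNReal.ofReal K * edist (φ x) (φ y) := by rw [edist_dist]
        _ ≤ ENNReal.ofReal K * EMetric.diam s := mul_le_mul_right h1 _
    simp only [MeasureTheory.Measure.hausdorffMeasure_apply, ENNReal.mul_iSup, ENNReal.mul_iInf_of_ne hCd0 hCd,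
      ← ENNReal.tsum_mul_left]
    refine iSup₂_le fun ε ε0 => ?_
    refine le_iSup₂_of_le (min (ε / ENNReal.ofReal K) (ENNReal.ofReal u))
      (lt_min (ENNReal.div_pos ε0.ne' ENNReal.ofReal_ne_top) (ENNReal.ofReal_pos.2 hu0)) ?_
    refine le_iInf₂ fun t hst => le_iInf fun htδ => ?_
    have htu : ∀ i, EMetric.diam (t i) ≤ ENNReal.ofReal u := fun i =>
      (htδ i).trans (min_le_right _ _)
    refine iInf₂_le_of_le (fun i => V ∩ φ ⁻¹' t i) ?_ (iInf_le_of_le (fun i => ?_) ?_)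
    · intro x hx
      rcases Set.mem_iUnion.1 (hst (Set.mem_image_of_mem φ hx)) with ⟨i, hi⟩
      exact Set.mem_iUnion.2 ⟨i, hx, hi⟩
    · exact (hdi (t i) (htu i)).trans
        (ENNReal.mul_le_of_le_div' ((htδ i).trans (min_le_left _ _)))
    · refine ENNReal.tsum_le_tsum fun i => iSup_le_iff.2 fun hne => ?_
      have hne' : (t i).Nonempty := by
        rcases hne with ⟨x, hx⟩
        exact ⟨φ x, hx.2⟩
      simp only [hne', ciSup_pos]
      calc EMetric.diam (V ∩ φ ⁻¹' t i) ^ (n : ℝ)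
          ≤ (ENNReal.ofReal K * EMetric.diam (t i)) ^ (n : ℝ) :=
            ENNReal.rpow_le_rpow (hdi (t i) (htu i)) hd0
        _ = ENNReal.ofReal K ^ (n : ℝ) * EMetric.diam (t i) ^ (n : ℝ) :=
            ENNReal.mul_rpow_of_nonneg _ _ hd0
  -- Pass to the limit `u → 0⁺`.
  have hg : ContinuousAt (fun u : ℝ => (c * (1 - (π * u / (4 * c)) ^ 2 / 4))⁻¹) 0 := by
    apply ContinuousAt.inv₀
    · fun_prop
    · simp [hc0.ne']
  have hgval : (c * (1 - (π * (0:ℝ) / (4 * c)) ^ 2 / 4))⁻¹ = c⁻¹ := by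
    simp
  have htend : Filter.Tendsto
      (fun u : ℝ => ENNReal.ofReal ((c * (1 - (π * u / (4 * c)) ^ 2 / 4))⁻¹) ^ (n : ℝ) *
        μH[(n : ℝ)] (φ '' V)) (nhdsWithin 0 (Set.Ioi 0))
      (nhds (ENNReal.ofReal c⁻¹ ^ (n : ℝ) * μH[(n : ℝ)] (φ '' V))) := by
    have h1 : Filter.Tendsto
        (fun u : ℝ => ENNReal.ofReal ((c * (1 - (π * u / (4 * c)) ^ 2 / 4))⁻¹) ^ (n : ℝ))
        (nhds 0) (nhds (ENNReal.ofReal c⁻¹ ^ (n : ℝ))) := by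
      have := ((ENNReal.continuous_rpow_const (y := (n : ℝ))).continuousAt.comp
        (ENNReal.continuous_ofReal.continuousAt.comp hg))
      simpa [Function.comp_def, hgval] using this.tendsto
    exact (ENNReal.Tendsto.mul_const h1
      (Or.inl (by simp [ENNReal.rpow_eq_zero_iff, ENNReal.ofReal_ne_top,
        (ENNReal.ofReal_pos.2 (inv_pos.2 hc0)).ne']))).mono_left nhdsWithin_le_nhds
  have hev : ∀ᶠ u in nhdsWithin (0:ℝ) (Set.Ioi 0),
      μH[(n : ℝ)] V ≤
        ENNReal.ofReal ((c * (1 - (π * u / (4 * c)) ^ 2 / 4))⁻¹) ^ (n : ℝ) *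
          μH[(n : ℝ)] (φ '' V) := by
    filter_upwards [Ioc_mem_nhdsGT_of_mem (Set.mem_Ico.2 ⟨le_refl (0:ℝ), hc0⟩)] with u hu
    refine main u hu.1 ?_
    rw [div_le_one (by positivity)]
    nlinarith [Real.pi_le_four, hu.1, hu.2]
  have hle : μH[(n : ℝ)] V ≤ ENNReal.ofReal c⁻¹ ^ (n : ℝ) * μH[(n : ℝ)] (φ '' V) :=
    ge_of_tendsto htend hev
  have hone : ENNReal.ofReal (c ^ n) * ENNReal.ofReal c⁻¹ ^ (n : ℝ) = 1 := by
    rw [ENNReal.rpow_natCast, ← ENNReal.ofReal_pow (by positivity),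
      ← ENNReal.ofReal_mul (by positivity), ← mul_pow, mul_inv_cancel₀ hc0.ne', one_pow,
      ENNReal.ofReal_one]
  calc ENNReal.ofReal (c ^ n) * μH[(n : ℝ)] V
      ≤ ENNReal.ofReal (c ^ n) * (ENNReal.ofReal c⁻¹ ^ (n : ℝ) * μH[(n : ℝ)] (φ '' V)) :=
        mul_le_mul_right hle _
    _ = μH[(n : ℝ)] (φ '' V) := by rw [← mul_assoc, hone, one_mul]
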